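/- Let T be a labeled monomial tree and, for each unordered pair of labels {i,j}, let b_ij denote the number of edges of T whose endpoint labels are {i,j}. Then Σ_{{i,j} : b_ij > 2} b_ij ≤ 6·Δ(T). -/
import Mathlib


/-- A labeled monomial tree over labels `{1,…,N}` (encoded as `Fin N`): a finite rooted
tree of depth `t` whose vertices lie in levels `0,…,t` (root at level `t`, all leaves at
level `0`), each vertex carrying a label, subject to the non-backtracking condition and
the condition that every edge-label pair occurs on at least two edges. -/
structure LabeledMonomialTree (N : ℕ) where
  depth : ℕ
  V : Type
  [instFintype : Fintype V]
  [instDecEq : DecidableEq V]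
  root : V
  parent : V → V
  level : V → ℕ
  label : V → Fin N
  parent_root : parent root = root
  level_root : level root = depth
  level_le : ∀ v, level v ≤ depth
  level_parent : ∀ v, v ≠ root → level (parent v) = level v + 1
  leaves_at_zero : ∀ v, 1 ≤ level v → ∃ w, w ≠ root ∧ parent w = v
  nonbacktracking : ∀ w, w ≠ root → parent w ≠ root →
    label (parent (parent w)) ≠ label w
  edges_doubled : ∀ v, v ≠ root → ∃ w, w ≠ root ∧ w ≠ v ∧
    s(label w, label (parent w)) = s(label v, label (parent v))

attribute [instance] LabeledMonomialTree.instFintype LabeledMonomialTree.instDecEq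

namespace LabeledMonomialTree

variable {N : ℕ}

/-- The number of edges of `T` (each non-root vertex contributes the edge to its
parent). -/
def numEdges (T : LabeledMonomialTree N) : ℕ := Fintype.card {v : T.V // v ≠ T.root}

/-- The number of distinct vertex labels of `T`. -/
def numLabels (T : LabeledMonomialTree N) : ℕ := (Finset.univ.image T.label).card

/-- The excess `Δ(T) = |E(T)|/2 - |V(T)| + 1`, where `|V(T)|` is the number of distinct
vertex labels. -/
def excess (T : LabeledMonomialTree N) : ℚ :=
  (T.numEdges : ℚ) / 2 - (T.numLabels : ℚ) + 1

/-- The unordered pair of endpoint labels of the edge from `v` to its parent. -/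
def edgeSym (T : LabeledMonomialTree N) (v : T.V) : Sym2 (Fin N) :=
  s(T.label v, T.label (T.parent v))

/-- The number of vertices of `T` carrying the label `i`. -/
noncomputable def mult (T : LabeledMonomialTree N) (i : Fin N) : ℕ :=
  Set.ncard {v : T.V | T.label v = i}

end LabeledMonomialTree

/-- **Bound on edge multiplicities above two.** For a labeled monomial tree `T`, writing
`b_{ij}` for the number of edges whose unordered pair of endpoint labels is `{i,j}`,
one has `Σ_{{i,j} : b_{ij} > 2} b_{ij} ≤ 6 Δ(T)`. -/
theorem sum_edge_mult_gt_two_le_six_excess {N : ℕ} (T : LabeledMonomialTree N) :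
    (∑ p ∈ Finset.univ.filter
        (fun p : Sym2 (Fin N) =>
          2 < Set.ncard {v : T.V | v ≠ T.root ∧ T.edgeSym v = p}),
      (Set.ncard {v : T.V | v ≠ T.root ∧ T.edgeSym v = p} : ℚ)) ≤ 6 * T.excess := by
  classical
  set b : Sym2 (Fin N) → ℕ :=
    fun p => (Finset.univ.filter (fun v => v ≠ T.root ∧ T.edgeSym v = p)).card with hb
  have hncard : ∀ p : Sym2 (Fin N),
      Set.ncard {v : T.V | v ≠ T.root ∧ T.edgeSym v = p} = b p := by
    intro p
    rw [show {v : T.V | v ≠ T.root ∧ T.edgeSym v = p}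
        = ↑(Finset.univ.filter (fun v => v ≠ T.root ∧ T.edgeSym v = p)) from by
      ext v; simp]
    exact Set.ncard_coe_finset _
  simp only [hncard]
  -- edge count decomposition
  have hE : T.numEdges = ∑ p : Sym2 (Fin N), b p := by
    rw [LabeledMonomialTree.numEdges, Fintype.card_subtype,
      Finset.card_eq_sum_card_fiberwise (f := T.edgeSym) (t := Finset.univ)
        (fun x _ => Finset.mem_univ _)]
    refine Finset.sum_congr rfl fun p _ => ?_
    rw [Finset.filter_filter]
  -- every occurring pair occurs at least twice
  have hdouble : ∀ p, 0 < b p → 2 ≤ b p := by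
    intro p hp
    rw [hb] at hp ⊢
    obtain ⟨v, hv⟩ := Finset.card_pos.mp hp
    rw [Finset.mem_filter] at hv
    obtain ⟨w, hw1, hw2, hw3⟩ := T.edges_doubled v hv.2.1
    refine Finset.one_lt_card.mpr ⟨v, Finset.mem_filter.mpr ⟨Finset.mem_univ _, hv.2⟩,
      w, Finset.mem_filter.mpr ⟨Finset.mem_univ _, hw1, ?_⟩, (Ne.symm hw2)⟩
    rw [LabeledMonomialTree.edgeSym, hw3, ← LabeledMonomialTree.edgeSym, hv.2.2]
  set P : Finset (Sym2 (Fin N)) := Finset.univ.filter (fun p => 0 < b p) with hP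
  set S3 : Finset (Sym2 (Fin N)) := Finset.univ.filter (fun p => 2 < b p) with hS3
  have hS3P : S3 ⊆ P := by
    intro p hp
    rw [hS3, Finset.mem_filter] at hp
    rw [hP, Finset.mem_filter]
    exact ⟨hp.1, by omega⟩
  -- connectivity lower bound: numLabels ≤ P.card + 1
  have hL : T.numLabels ≤ P.card + 1 := by
    set I : Finset (Fin N) := Finset.univ.image T.label with hI
    set r : Fin N := T.label T.root with hr
    have hex : ∀ i : Fin N, ∃ v : T.V, i ∈ I.erase r →
        T.label v = i ∧ ∀ w, T.label w = i → T.level w ≤ T.level v := by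
      intro i
      by_cases h : i ∈ I.erase r
      · have hne : (Finset.univ.filter (fun v => T.label v = i)).Nonempty := by
          obtain ⟨v, _, hv⟩ := Finset.mem_image.mp (Finset.mem_of_mem_erase h)
          exact ⟨v, Finset.mem_filter.mpr ⟨Finset.mem_univ _, hv⟩⟩
        obtain ⟨v, hv, hmax⟩ := Finset.exists_max_image _ T.level hne
        exact ⟨v, fun _ => ⟨(Finset.mem_filter.mp hv).2,
          fun w hw => hmax w (Finset.mem_filter.mpr ⟨Finset.mem_univ _, hw⟩)⟩⟩
      · exact ⟨T.root, fun h' => absurd h' h⟩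
    choose f hf using hex
    have hfroot : ∀ i ∈ I.erase r, f i ≠ T.root := by
      intro i hi hcon
      have := (hf i hi).1
      rw [hcon, ← hr] at this
      exact (Finset.ne_of_mem_erase hi) this.symm
    have hmaps : ∀ i ∈ I.erase r, T.edgeSym (f i) ∈ P := by
      intro i hi
      rw [hP, Finset.mem_filter]
      refine ⟨Finset.mem_univ _, Finset.card_pos.mpr ⟨f i, ?_⟩⟩
      exact Finset.mem_filter.mpr ⟨Finset.mem_univ _, hfroot i hi, rfl⟩
    have hinj : Set.InjOn (fun i => T.edgeSym (f i)) (I.erase r) := by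
      intro i hi j hj hEq
      simp only at hEq
      have hi' : i ∈ I.erase r := by exact_mod_cast hi
      have hj' : j ∈ I.erase r := by exact_mod_cast hj
      have hfi := hf i hi'
      have hfj := hf j hj'
      rw [LabeledMonomialTree.edgeSym, LabeledMonomialTree.edgeSym,
        hfi.1, hfj.1] at hEq
      rcases Sym2.eq_iff.mp hEq with ⟨h1, _⟩ | ⟨h1, h2⟩
      · exact h1
      · exfalso
        have l1 : T.level (T.parent (f i)) ≤ T.level (f j) := hfj.2 _ h2
        have l2 : T.level (T.parent (f j)) ≤ T.level (f i) := hfi.2 _ h1.symm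
        have e1 : T.level (T.parent (f i)) = T.level (f i) + 1 :=
          T.level_parent _ (hfroot i hi')
        have e2 : T.level (T.parent (f j)) = T.level (f j) + 1 :=
          T.level_parent _ (hfroot j hj')
        omega
    have hcard : (I.erase r).card ≤ P.card :=
      Finset.card_le_card_of_injOn _ hmaps hinj
    have hrI : r ∈ I := Finset.mem_image.mpr ⟨T.root, Finset.mem_univ _, rfl⟩
    have herase : (I.erase r).card = I.card - 1 := Finset.card_erase_of_mem hrI
    have hIpos : 0 < I.card := Finset.card_pos.mpr ⟨r, hrI⟩
    rw [LabeledMonomialTree.numLabels, ← hI]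
    omega
  -- sum decomposition
  have hsplit : ∑ p : Sym2 (Fin N), b p
      = (∑ p ∈ S3, b p) + ∑ p ∈ P \ S3, b p := by
    have h0 : ∑ p ∈ Finset.univ \ P, b p = 0 := by
      refine Finset.sum_eq_zero fun p hp => ?_
      simp only [Finset.mem_sdiff, hP, Finset.mem_filter, Finset.mem_univ, true_and,
        not_lt, Nat.le_zero] at hp
      exact hp
    have h1 : ∑ p : Sym2 (Fin N), b p = ∑ p ∈ P, b p := by
      rw [← Finset.sum_sdiff (Finset.subset_univ P), h0, zero_add]
    rw [h1, ← Finset.sum_sdiff hS3P]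
    ring
  have h2 : ∑ p ∈ P \ S3, b p = 2 * (P.card - S3.card) := by
    rw [← Finset.card_sdiff_of_subset hS3P]
    rw [Finset.sum_congr rfl (fun p hp => ?_), Finset.sum_const, smul_eq_mul, mul_comm]
    rw [Finset.mem_sdiff, hP, hS3, Finset.mem_filter, Finset.mem_filter] at hp
    have := hdouble p hp.1.2
    have : ¬ 2 < b p := fun h => hp.2 ⟨Finset.mem_univ _, h⟩
    omega
  have h3 : 3 * S3.card ≤ ∑ p ∈ S3, b p := by
    have := Finset.card_nsmul_le_sum S3 b 3 (fun p hp => by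
      rw [hS3, Finset.mem_filter] at hp; omega)
    simpa [smul_eq_mul, mul_comm] using this
  have hPc : S3.card ≤ P.card := Finset.card_le_card hS3P
  -- final arithmetic in ℕ
  have key : (∑ p ∈ S3, b p) + 6 * T.numLabels ≤ 3 * T.numEdges + 6 := by
    rw [hE, hsplit, h2]
    omega
  -- convert to ℚ
  rw [LabeledMonomialTree.excess]
  rw [show (∑ p ∈ S3, ((b p : ℚ))) = ((∑ p ∈ S3, b p : ℕ) : ℚ) from
    (Nat.cast_sum _ _).symm]
  have key' : ((∑ p ∈ S3, b p : ℕ) : ℚ) + 6 * (T.numLabels : ℚ)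
      ≤ 3 * (T.numEdges : ℚ) + 6 := by exact_mod_cast key
  linarith
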